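/- Let u₁, u₂, u₃ solve u₁' = 1/4 + u₂ - u₁², u₂' = λ u₂ u₃, u₃' = 1/4 + (2/k²)u₂ - u₁ u₃ (the case ε = -1, i.e., V₀ < 0) with u₂ > 0, u₃ > 0, u₃ < u₁, on a maximal interval (0, τ_M). If at some τ₀ we have u₁(τ₀) ≤ k² u₃(τ₀), then u₁(τ) < k² u₃(τ) for all τ ∈ (τ₀, τ_M), since d/dτ(u₁ - k²u₃) = -(k²-1)/4 - u₂ - u₁(u₁ - k²u₃) ≤ -1/4 - u₂ < 0 whenever u₁ ≥ k² u₃ and k² ≥ 2. -/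

import Mathlib

open Set

theorem u1_lt_k2u3_invariant (k lam τ₀ τM : ℝ) (hk : 2 ≤ k ^ 2)
    (hlam : lam = k ^ 2 / 2 - 1) (hτ₀ : τ₀ ∈ Ioo (0:ℝ) τM)
    (u₁ u₂ u₃ : ℝ → ℝ)
    (hODE1 : ∀ τ ∈ Ioo (0:ℝ) τM,
      HasDerivAt u₁ (1/4 + u₂ τ - (u₁ τ) ^ 2) τ)
    (hODE2 : ∀ τ ∈ Ioo (0:ℝ) τM, HasDerivAt u₂ (lam * u₂ τ * u₃ τ) τ)
    (hODE3 : ∀ τ ∈ Ioo (0:ℝ) τM,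
      HasDerivAt u₃ (1/4 + (2 / k ^ 2) * u₂ τ - u₁ τ * u₃ τ) τ)
    (hu₂ : ∀ τ ∈ Ioo (0:ℝ) τM, 0 < u₂ τ)
    (hu₃ : ∀ τ ∈ Ioo (0:ℝ) τM, 0 < u₃ τ)
    (hu₃₁ : ∀ τ ∈ Ioo (0:ℝ) τM, u₃ τ < u₁ τ)
    (hcross : u₁ τ₀ ≤ k ^ 2 * u₃ τ₀) :
    ∀ τ ∈ Ioo τ₀ τM, u₁ τ < k ^ 2 * u₃ τ := by
  have hk0 : (k:ℝ) ^ 2 ≠ 0 := by nlinarith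
  have hopen : IsOpen (Ioo (0:ℝ) τM) := isOpen_Ioo
  have hcont : ContinuousOn u₁ (Ioo (0:ℝ) τM) := fun x hx =>
    ((hODE1 x hx).continuousAt).continuousWithinAt
  set U : ℝ → ℝ := fun τ => ∫ s in τ₀..τ, u₁ s with hUdef
  have hU : ∀ τ ∈ Ioo (0:ℝ) τM, HasDerivAt U (u₁ τ) τ := by
    intro τ hτ
    have hsub : uIcc τ₀ τ ⊆ Ioo (0:ℝ) τM :=
      (Set.ordConnected_Ioo).uIcc_subset hτ₀ hτ
    have hint : IntervalIntegrable u₁ MeasureTheory.volume τ₀ τ :=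
      (hcont.mono hsub).intervalIntegrable
    have hmeas : StronglyMeasurableAtFilter u₁ (nhds τ) :=
      ⟨Ioo (0:ℝ) τM, hopen.mem_nhds hτ,
        (hcont.aestronglyMeasurable hopen.measurableSet)⟩
    exact intervalIntegral.integral_hasDerivAt_right hint hmeas
      ((hODE1 τ hτ).continuousAt)
  set W : ℝ → ℝ := fun τ => (u₁ τ - k ^ 2 * u₃ τ) * Real.exp (U τ) with hWdef
  have hW : ∀ τ ∈ Ioo (0:ℝ) τM,
      HasDerivAt W (Real.exp (U τ) * ((1 - k ^ 2) / 4 - u₂ τ)) τ := by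
    intro τ hτ
    have h := ((hODE1 τ hτ).sub ((hODE3 τ hτ).const_mul (k ^ 2))).mul
      ((hU τ hτ).exp)
    convert h using 1
    case e'_4 => rfl
    case e'_5 => rfl
    case e'_8 => rfl
    simp only [Pi.sub_apply]
    have hk1 : k ≠ 0 := fun h => hk0 (by rw [h]; ring)
    field_simp
    ring
  intro τ hτ
  have hτI : τ ∈ Ioo (0:ℝ) τM := ⟨lt_trans hτ₀.1 hτ.1, hτ.2⟩
  have hsub : Icc τ₀ τ ⊆ Ioo (0:ℝ) τM := fun x hx =>
    ⟨lt_of_lt_of_le hτ₀.1 hx.1, lt_of_le_of_lt hx.2 hτ.2⟩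
  have hanti : StrictAntiOn W (Icc τ₀ τ) := by
    apply strictAntiOn_of_deriv_neg (convex_Icc τ₀ τ)
    · exact fun x hx => ((hW x (hsub hx)).continuousAt).continuousWithinAt
    · intro x hx
      rw [interior_Icc] at hx
      have hxI := hsub (Ioo_subset_Icc_self hx)
      rw [(hW x hxI).deriv]
      have h2 := hu₂ x hxI
      have := Real.exp_pos (U x)
      nlinarith
  have hWτ : W τ < W τ₀ :=
    hanti ⟨le_refl τ₀, le_of_lt hτ.1⟩ ⟨le_of_lt hτ.1, le_refl τ⟩ hτ.1
  have hW0 : W τ₀ ≤ 0 := by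
    have := Real.exp_pos (U τ₀)
    have : u₁ τ₀ - k ^ 2 * u₃ τ₀ ≤ 0 := by linarith
    simp only [hWdef]
    exact mul_nonpos_of_nonpos_of_nonneg this (Real.exp_pos _).le
  have hneg : (u₁ τ - k ^ 2 * u₃ τ) * Real.exp (U τ) < 0 := lt_of_lt_of_le hWτ hW0
  have he := Real.exp_pos (U τ)
  nlinarith
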